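/- Let P, Q : ℤ × ℝ → ℝ be differentiable in t with P(n,t) ≠ 0 for all n, t, satisfying the Ablowitz–Ladik equation in the variables P, Q: ∂ₜP(n) = P(n)(Q(n+1) − Q(n)) + Q(n+1)/P(n+1) − Q(n)/P(n−1) and ∂ₜQ(n) = Q(n)(Q(n+1) − Q(n−1) − P(n) + P(n−1)) + Q(n)/P(n) − Q(n)/P(n−1). Then the functions P̂(n,t) = 1/P(−n,t) and Q̂(n,t) = Q(−n+1,t)/(P(−n,t)P(−n+1,t)) satisfy the same system of equations; i.e., this is a Bäcklund transformation of the Ablowitz–Ladik equation. -/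

import Mathlib

/-- Bäcklund transformation of the Ablowitz–Ladik equation: if `P, Q`
satisfy `∂ₜP = P(Q⁺ − Q) + Q⁺/P⁺ − Q/P⁻` and `∂ₜQ = Q(Q⁺ − Q⁻ − P + P⁻) + Q/P − Q/P⁻`,
then `P̂(n,t) = 1/P(−n,t)` and `Q̂(n,t) = Q(−n+1,t)/(P(−n,t)P(−n+1,t))` satisfy the same
system of equations. -/
theorem ablowitz_ladik_backlund_transformation
    (P Q : ℤ → ℝ → ℝ)
    (hP : ∀ (n : ℤ) (t : ℝ), P n t ≠ 0)
    (hflowP : ∀ (n : ℤ) (t : ℝ),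
      HasDerivAt (P n)
        (P n t * (Q (n + 1) t - Q n t) + Q (n + 1) t / P (n + 1) t - Q n t / P (n - 1) t) t)
    (hflowQ : ∀ (n : ℤ) (t : ℝ),
      HasDerivAt (Q n)
        (Q n t * (Q (n + 1) t - Q (n - 1) t - P n t + P (n - 1) t)
          + Q n t / P n t - Q n t / P (n - 1) t) t)
    (Phat Qhat : ℤ → ℝ → ℝ)
    (hPhat : ∀ (n : ℤ) (t : ℝ), Phat n t = 1 / P (-n) t)
    (hQhat : ∀ (n : ℤ) (t : ℝ), Qhat n t = Q (-n + 1) t / (P (-n) t * P (-n + 1) t)) :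
    ∀ (n : ℤ) (t : ℝ),
      HasDerivAt (Phat n)
        (Phat n t * (Qhat (n + 1) t - Qhat n t)
          + Qhat (n + 1) t / Phat (n + 1) t - Qhat n t / Phat (n - 1) t) t ∧
      HasDerivAt (Qhat n)
        (Qhat n t * (Qhat (n + 1) t - Qhat (n - 1) t - Phat n t + Phat (n - 1) t)
          + Qhat n t / Phat n t - Qhat n t / Phat (n - 1) t) t := by
  intro n t
  have hfunP : ∀ m : ℤ, Phat m = fun s => (P (-m) s)⁻¹ := fun m =>
    funext fun s => by rw [hPhat]; exact one_div _
  have hfunQ : ∀ m : ℤ, Qhat m = fun s => Q (-m + 1) s / (P (-m) s * P (-m + 1) s) := fun m =>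
    funext fun s => hQhat m s
  constructor
  · rw [hfunP]
    have key := (hflowP (-n) t).inv (hP (-n) t)
    refine key.congr_deriv ?_
    symm
    simp only [hPhat, hQhat]
    have e1 : (-(n+1) : ℤ) = -n - 1 := by ring
    have e2 : (-(n-1) : ℤ) = -n + 1 := by ring
    have e3 : (-n - 1 + 1 : ℤ) = -n := by ring
    have e4 : (-n + 1 - 1 : ℤ) = -n := by ring
    simp only [e1, e2, e3, e4]
    have h0 := hP (-n) t
    have h1 := hP (-n+1) t
    have h2 := hP (-n-1) t
    field_simp
    ring
  · rw [hfunQ]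
    have key := (hflowQ (-n+1) t).div
      ((hflowP (-n) t).mul (hflowP (-n+1) t))
      (mul_ne_zero (hP (-n) t) (hP (-n+1) t))
    refine key.congr_deriv ?_
    symm
    simp only [hPhat, hQhat]
    have e1 : (-(n+1) : ℤ) = -n - 1 := by ring
    have e2 : (-(n-1) : ℤ) = -n + 1 := by ring
    have e3 : (-n - 1 + 1 : ℤ) = -n := by ring
    have e4 : (-n + 1 - 1 : ℤ) = -n := by ring
    have e5 : (-n + 1 + 1 : ℤ) = -n + 2 := by ring
    have e6 : (-(n-1) + 1 : ℤ) = -n + 2 := by ring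
    have e7 : (-(n+1) + 1 : ℤ) = -n := by ring
    simp only [e1, e2, e3, e4, e5, e6, e7, Pi.mul_apply]
    have h0 := hP (-n) t
    have h1 := hP (-n+1) t
    have h2 := hP (-n-1) t
    have h3 := hP (-n+2) t
    field_simp
    ring
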